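/- Let (T_n) be any quantities satisfying: for a continuous nonneg function sequence Φ_n : [0,1] → ℝ with Φ_n(0)=0, Φ_n(t) ≤ ∫₀ᵗ (c/2 + m·Φ_n(s))/(1 - ms - Σ²·Φ_n(s)) ds holds whenever 1 - mt - Σ²·Φ_n(t) ≥ 0, where c ≥ 0, m ∈ (0,1], Σ² > 0. Let f be the explicit solution f(t) = ((1-mt) - √((1-mt)² - Σ²ct))/Σ² on [0, t_max], t_max the smallest positive root of (1-mt)² = Σ²ct, t_max ≤ 1. Then Φ_n(t) ≤ f(t) for all t ∈ [0, t_max]. -/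

import Mathlib

open Set Filter

set_option maxHeartbeats 2000000 in
lemma stmt12_aux (m c Sig2 t ρ ε η : ℝ) (hm0 : 0 < m) (hm1 : m ≤ 1) (hc : 0 ≤ c)
    (hS : 0 < Sig2) (ht0 : 0 ≤ t) (ht1 : t ≤ 1)
    (hε : 0 < ε) (hρ : 0 < ρ)
    (hql : ∀ s, 0 ≤ s → s ≤ t → ρ ^ 2 ≤ (1 - m * s) ^ 2 - Sig2 * (c + ε) * s)
    (hη : 0 < η) (hη1 : Sig2 * η ≤ ρ / 2)
    (hη3 : η * (2 * m + Sig2 * (c + ε) / 2 + 1) ≤ ε * ρ / 2)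
    (Φ : ℝ → ℝ) (hcont : ContinuousOn Φ (Set.Icc 0 1))
    (hnn : ∀ s ∈ Set.Icc (0 : ℝ) 1, 0 ≤ Φ s)
    (h0 : Φ 0 = 0)
    (hsub : ∀ s ∈ Set.Icc (0 : ℝ) 1, 0 ≤ 1 - m * s - Sig2 * Φ s →
      Φ s ≤ ∫ u in (0 : ℝ)..s, (c / 2 + m * Φ u) / (1 - m * u - Sig2 * Φ u)) :
    Φ t ≤ ((1 - m * t) - Real.sqrt ((1 - m * t) ^ 2 - Sig2 * (c + ε) * t)) / Sig2 + η := by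
  obtain ⟨qe, hqe_eq⟩ : ∃ qe : ℝ → ℝ, ∀ s, qe s = (1 - m * s) ^ 2 - Sig2 * (c + ε) * s :=
    ⟨_, fun s => rfl⟩
  obtain ⟨G, hG_eq⟩ : ∃ G : ℝ → ℝ, ∀ s, G s = Real.sqrt (qe s) := ⟨_, fun s => rfl⟩
  obtain ⟨B, hB_eq⟩ : ∃ B : ℝ → ℝ, ∀ s, B s = ((1 - m * s) - G s) / Sig2 := ⟨_, fun s => rfl⟩
  obtain ⟨B', hB'_eq⟩ : ∃ B' : ℝ → ℝ, ∀ s, B' s = ((c + ε) / 2 + m * B s) / G s :=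
    ⟨_, fun s => rfl⟩
  have hqe_lb : ∀ s ∈ Icc (0:ℝ) t, ρ ^ 2 ≤ qe s := by
    rintro s ⟨hs0, hst⟩; rw [hqe_eq]; exact hql s hs0 hst
  have hqe_pos : ∀ s ∈ Icc (0:ℝ) t, 0 < qe s := fun s hs =>
    lt_of_lt_of_le (by positivity) (hqe_lb s hs)
  have hqe_ub : ∀ s ∈ Icc (0:ℝ) t, qe s ≤ 1 := by
    rintro s ⟨hs0, hst⟩
    have hs1 : s ≤ 1 := hst.trans ht1
    have hms : m * s ≤ 1 := by nlinarith
    rw [hqe_eq]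
    nlinarith [mul_nonneg (mul_nonneg hS.le (by linarith : (0:ℝ) ≤ c + ε)) hs0,
      mul_nonneg hm0.le hs0, mul_le_mul_of_nonneg_right hms (mul_nonneg hm0.le hs0)]
  have hGlb : ∀ s ∈ Icc (0:ℝ) t, ρ ≤ G s := by
    intro s hs
    rw [hG_eq]
    exact (Real.le_sqrt hρ.le (hqe_pos s hs).le).mpr (hqe_lb s hs)
  have hGub : ∀ s ∈ Icc (0:ℝ) t, G s ≤ 1 := by
    intro s hs
    rw [hG_eq]
    exact Real.sqrt_le_one.mpr (hqe_ub s hs)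
  have hGle : ∀ s ∈ Icc (0:ℝ) t, G s ≤ 1 - m * s := by
    rintro s hs
    have hs1 : s ≤ 1 := hs.2.trans ht1
    have h1 : (0:ℝ) ≤ 1 - m * s := by nlinarith [mul_nonneg hm0.le hs.1]
    have h2 : qe s ≤ (1 - m * s) ^ 2 := by
      rw [hqe_eq]
      nlinarith [mul_nonneg (mul_nonneg hS.le (by linarith : (0:ℝ) ≤ c + ε)) hs.1]
    rw [hG_eq]
    calc Real.sqrt (qe s) ≤ Real.sqrt ((1 - m * s) ^ 2) := Real.sqrt_le_sqrt h2
      _ = 1 - m * s := Real.sqrt_sq h1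
  have hB0 : B 0 = 0 := by
    rw [hB_eq, hG_eq, hqe_eq]
    norm_num
  have hBnn : ∀ s ∈ Icc (0:ℝ) t, 0 ≤ B s := by
    intro s hs
    have h1 := hGle s hs
    rw [hB_eq]
    have h2 : (0:ℝ) ≤ (1 - m * s) - G s := by linarith
    positivity
  have hBub : ∀ s ∈ Icc (0:ℝ) t, Sig2 * B s ≤ 1 := by
    intro s hs
    have h1 : (0:ℝ) ≤ G s := le_trans hρ.le (hGlb s hs)
    have h2 : Sig2 * B s = (1 - m * s) - G s := by
      rw [hB_eq]; field_simp
    have h3 : (0:ℝ) ≤ m * s := mul_nonneg hm0.le hs.1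
    linarith
  have hBfun : B = fun s => ((1 - m * s) - Real.sqrt ((1 - m * s) ^ 2 - Sig2 * (c + ε) * s)) / Sig2 := by
    funext s; rw [hB_eq, hG_eq, hqe_eq]
  have hBcont : Continuous B := by
    rw [hBfun]; fun_prop
  -- the claim is `Φ t ≤ B t + η`
  rw [show ((1 - m * t) - Real.sqrt ((1 - m * t) ^ 2 - Sig2 * (c + ε) * t)) / Sig2 = B t by
    rw [hB_eq, hG_eq, hqe_eq]]
  by_contra hcon
  push_neg at hcon
  -- first crossing time
  set C : Set ℝ := Icc 0 t ∩ (fun s => Φ s - B s) ⁻¹' Ici η with hC_def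
  have hΦcontt : ContinuousOn Φ (Icc 0 t) := hcont.mono (Icc_subset_Icc le_rfl ht1)
  have hCclosed : IsClosed C :=
    ContinuousOn.preimage_isClosed_of_isClosed
      (hΦcontt.sub hBcont.continuousOn) isClosed_Icc isClosed_Ici
  have hCne : C.Nonempty := ⟨t, ⟨ht0, le_refl t⟩, by
    simp only [mem_preimage, mem_Ici]; linarith⟩
  have hCbdd : BddBelow C := ⟨0, fun x hx => hx.1.1⟩
  set t₁ : ℝ := sInf C with ht₁_def
  have ht₁mem : t₁ ∈ C := hCclosed.csInf_mem hCne hCbdd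
  have ht₁Icc : t₁ ∈ Icc (0:ℝ) t := ht₁mem.1
  have ht₁ge : B t₁ + η ≤ Φ t₁ := by
    have h' := ht₁mem.2
    simp only [mem_preimage, mem_Ici] at h'
    linarith
  have ht₁pos : 0 < t₁ := by
    rcases eq_or_lt_of_le ht₁Icc.1 with h' | h'
    · exfalso
      rw [← h'] at ht₁ge
      rw [h0, hB0] at ht₁ge
      linarith
    · exact h'
  have hlt : ∀ s ∈ Ico (0:ℝ) t₁, Φ s < B s + η := by
    rintro s ⟨hs0, hst₁⟩
    by_contra h'
    push_neg at h'
    have hsC : s ∈ C := ⟨⟨hs0, hst₁.le.trans ht₁Icc.2⟩, by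
      simp only [mem_preimage, mem_Ici]; linarith⟩
    exact absurd (csInf_le hCbdd hsC) (not_le.mpr hst₁)
  -- left-continuity gives Φ t₁ ≤ B t₁ + η
  have hΦt₁le : Φ t₁ ≤ B t₁ + η := by
    have hne : t₁ ∈ closure (Ico (0:ℝ) t₁) := by
      rw [closure_Ico (ne_of_lt ht₁pos)]
      exact ⟨ht₁pos.le, le_refl t₁⟩
    haveI hNB : (nhdsWithin t₁ (Ico (0:ℝ) t₁)).NeBot :=
      mem_closure_iff_nhdsWithin_neBot.mp hne
    have htend : Tendsto (fun s => Φ s - B s) (nhdsWithin t₁ (Ico (0:ℝ) t₁))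
        (nhds (Φ t₁ - B t₁)) := by
      have hc1 : ContinuousWithinAt Φ (Ico (0:ℝ) t₁) t₁ := by
        apply (hcont t₁ ⟨ht₁pos.le, ht₁Icc.2.trans ht1⟩).mono
        exact fun x hx => ⟨hx.1, hx.2.le.trans (ht₁Icc.2.trans ht1)⟩
      exact (hc1.sub (hBcont.continuousAt.continuousWithinAt)).tendsto
    have hev : ∀ᶠ s in nhdsWithin t₁ (Ico (0:ℝ) t₁), Φ s - B s ≤ η :=
      eventually_mem_nhdsWithin.mono fun s hs => by linarith [hlt s hs]
    have := le_of_tendsto htend hev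
    linarith
  have hΦle : ∀ s ∈ Icc (0:ℝ) t₁, Φ s ≤ B s + η := by
    rintro s ⟨hs0, hst₁⟩
    rcases eq_or_lt_of_le hst₁ with h' | h'
    · rw [h']; exact hΦt₁le
    · exact (hlt s ⟨hs0, h'⟩).le
  have hsubt : Icc (0:ℝ) t₁ ⊆ Icc (0:ℝ) t := Icc_subset_Icc le_rfl ht₁Icc.2
  -- denominator lower bound on [0, t₁]
  have hden : ∀ s ∈ Icc (0:ℝ) t₁, ρ / 2 ≤ 1 - m * s - Sig2 * Φ s := by
    intro s hs
    have h1 := hΦle s hs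
    have h2 : Sig2 * B s = (1 - m * s) - G s := by
      rw [hB_eq]; field_simp
    have h3 := hGlb s (hsubt hs)
    nlinarith
  -- pointwise inequality: integrand ≤ B'
  have hpt : ∀ s ∈ Icc (0:ℝ) t₁,
      (c / 2 + m * Φ s) / (1 - m * s - Sig2 * Φ s) ≤ B' s := by
    intro s hs
    have hst := hsubt hs
    have h1 := hΦle s hs
    have h2 : Sig2 * B s = (1 - m * s) - G s := by
      rw [hB_eq]; field_simp
    have hGl := hGlb s hst
    have hGu := hGub s hst
    have hBn := hBnn s hst
    have hBu := hBub s hst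
    have hΦn : 0 ≤ Φ s := hnn s ⟨hs.1, (hst.2.trans ht1)⟩
    have hdle : G s - Sig2 * η ≤ 1 - m * s - Sig2 * Φ s := by nlinarith
    have hdpos : 0 < G s - Sig2 * η := by linarith
    rw [hB'_eq]
    have step1 : (c / 2 + m * Φ s) / (1 - m * s - Sig2 * Φ s)
        ≤ (c / 2 + m * (B s + η)) / (G s - Sig2 * η) := by
      apply div_le_div₀ (by nlinarith) (by nlinarith) hdpos hdle
    have step2 : (c / 2 + m * (B s + η)) / (G s - Sig2 * η)
        ≤ ((c + ε) / 2 + m * B s) / G s := by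
      rw [div_le_div_iff₀ hdpos (by linarith : (0:ℝ) < G s)]
      have e1 : m * η * G s ≤ m * η := by
        nlinarith [mul_le_mul_of_nonneg_left hGu (mul_nonneg hm0.le hη.le)]
      have e2 : Sig2 * η * (m * B s) ≤ m * η := by
        nlinarith [mul_le_mul_of_nonneg_left hBu (mul_nonneg hm0.le hη.le)]
      have e5 : ε * ρ / 2 ≤ ε / 2 * G s := by
        nlinarith [mul_le_mul_of_nonneg_left hGl (by positivity : (0:ℝ) ≤ ε / 2)]
      nlinarith [e1, e2, e5, hη3, mul_nonneg hη.le (mul_nonneg hS.le (by linarith : (0:ℝ) ≤ c + ε))]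
    exact step1.trans step2
  -- integrability
  have hint1 : IntervalIntegrable (fun s => (c / 2 + m * Φ s) / (1 - m * s - Sig2 * Φ s))
      MeasureTheory.volume 0 t₁ := by
    apply ContinuousOn.intervalIntegrable_of_Icc ht₁pos.le
    apply ContinuousOn.div
    · exact continuousOn_const.add (continuousOn_const.mul (hΦcontt.mono hsubt))
    · exact (continuousOn_const.sub (continuousOn_const.mul continuousOn_id)).sub
        (continuousOn_const.mul (hΦcontt.mono hsubt))
    · intro s hs
      have h' := hden s hs
      intro hzero
      rw [hzero] at h'
      linarith
  have hGcont : Continuous G := by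
    have : G = fun s => Real.sqrt ((1 - m * s) ^ 2 - Sig2 * (c + ε) * s) := by
      funext s; rw [hG_eq, hqe_eq]
    rw [this]; fun_prop
  have hB'cont : ContinuousOn B' (Icc 0 t₁) := by
    have hfun : ∀ s ∈ Icc (0:ℝ) t₁, B' s = ((c + ε) / 2 + m * B s) / G s := fun s _ => hB'_eq s
    apply ContinuousOn.congr _ hfun
    apply ContinuousOn.div
    · exact continuousOn_const.add (continuousOn_const.mul hBcont.continuousOn)
    · exact hGcont.continuousOn
    · intro s hs
      have h' := hGlb s (hsubt hs)
      intro hzero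
      rw [hzero] at h'
      linarith
  have hint2 : IntervalIntegrable B' MeasureTheory.volume 0 t₁ :=
    ContinuousOn.intervalIntegrable_of_Icc ht₁pos.le hB'cont
  -- FTC for the barrier
  have hderiv : ∀ x ∈ uIcc (0:ℝ) t₁, HasDerivAt B (B' x) x := by
    intro x hx
    rw [uIcc_of_le ht₁pos.le] at hx
    have hxt := hsubt hx
    have hqx : (1 - m * x) ^ 2 - Sig2 * (c + ε) * x ≠ 0 := by
      have := hqe_pos x hxt
      rw [hqe_eq] at this
      exact this.ne'
    have h1 : HasDerivAt (fun s : ℝ => 1 - m * s) (-m) x := by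
      simpa using ((hasDerivAt_id x).const_mul m).const_sub 1
    have h2 : HasDerivAt (fun s : ℝ => (1 - m * s) ^ 2 - Sig2 * (c + ε) * s)
        (2 * (1 - m * x) * (-m) - Sig2 * (c + ε)) x := by
      have h3 : HasDerivAt (fun s : ℝ => Sig2 * (c + ε) * s) (Sig2 * (c + ε)) x := by
        simpa using (hasDerivAt_id x).const_mul (Sig2 * (c + ε))
      have h4 := (h1.pow 2).sub h3
      refine h4.congr_deriv ?_
      push_cast
      ring
    have h5 := h2.sqrt hqx
    have h6 : HasDerivAt B
        ((-m - (2 * (1 - m * x) * (-m) - Sig2 * (c + ε)) /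
          (2 * Real.sqrt ((1 - m * x) ^ 2 - Sig2 * (c + ε) * x))) / Sig2) x := by
      rw [hBfun]
      exact (h1.sub h5).div_const Sig2
    have hGxpos : 0 < Real.sqrt ((1 - m * x) ^ 2 - Sig2 * (c + ε) * x) := by
      have h' := hGlb x hxt
      rw [hG_eq, hqe_eq] at h'
      linarith
    convert h6 using 1
    rw [hB'_eq, hB_eq, hG_eq, hqe_eq]
    generalize Real.sqrt ((1 - m * x) ^ 2 - Sig2 * (c + ε) * x) = r at *
    field_simp
    ring
  have hftc : ∫ s in (0:ℝ)..t₁, B' s = B t₁ - B 0 :=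
    intervalIntegral.integral_eq_sub_of_hasDerivAt hderiv hint2
  -- put everything together
  have happ : Φ t₁ ≤ ∫ s in (0:ℝ)..t₁, (c / 2 + m * Φ s) / (1 - m * s - Sig2 * Φ s) := by
    apply hsub t₁ ⟨ht₁pos.le, ht₁Icc.2.trans ht1⟩
    have := hden t₁ ⟨ht₁pos.le, le_refl t₁⟩
    linarith
  have hmono := intervalIntegral.integral_mono_on ht₁pos.le hint1 hint2 hpt
  rw [hftc, hB0] at hmono
  linarith

set_option maxHeartbeats 2000000 in
/-- a continuous nonnegative subsolution `Φ` of the flux integral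
equation stays below the explicit solution `f` on `[0, t_max]`. -/
theorem stmt12 (m c Sig2 tmax : ℝ) (hm0 : 0 < m) (hm1 : m ≤ 1) (hc : 0 ≤ c)
    (hS : 0 < Sig2) (htpos : 0 < tmax) (htle : tmax ≤ 1)
    (hroot : (1 - m * tmax) ^ 2 = Sig2 * c * tmax)
    (hmin : ∀ s : ℝ, 0 < s → s < tmax → (1 - m * s) ^ 2 ≠ Sig2 * c * s)
    (f : ℝ → ℝ)
    (hf : ∀ t, f t = ((1 - m * t) - Real.sqrt ((1 - m * t) ^ 2 - Sig2 * c * t)) / Sig2)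
    (Φ : ℝ → ℝ) (hcont : ContinuousOn Φ (Set.Icc 0 1))
    (hnn : ∀ t ∈ Set.Icc (0 : ℝ) 1, 0 ≤ Φ t)
    (h0 : Φ 0 = 0)
    (hsub : ∀ t ∈ Set.Icc (0 : ℝ) 1, 0 ≤ 1 - m * t - Sig2 * Φ t →
      Φ t ≤ ∫ s in (0 : ℝ)..t, (c / 2 + m * Φ s) / (1 - m * s - Sig2 * Φ s)) :
    ∀ t ∈ Set.Icc (0 : ℝ) tmax, Φ t ≤ f t := by
  -- positivity of the discriminant before tmax
  have hq0 : ∀ s : ℝ, 0 ≤ s → s < tmax → 0 < (1 - m * s) ^ 2 - Sig2 * c * s := by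
    intro s hs0 hstm
    by_contra h
    push_neg at h
    have hcontq : ContinuousOn (fun u : ℝ => (1 - m * u) ^ 2 - Sig2 * c * u) (Icc 0 s) := by
      fun_prop
    have h1 : (0 : ℝ) ∈ Icc ((1 - m * s) ^ 2 - Sig2 * c * s)
        ((1 - m * 0) ^ 2 - Sig2 * c * 0) := by
      constructor
      · linarith
      · norm_num
    obtain ⟨z, hz, hz0⟩ := intermediate_value_Icc' hs0 hcontq h1
    have hz0' : (1 - m * z) ^ 2 - Sig2 * c * z = 0 := hz0
    have hzpos : 0 < z := by
      rcases eq_or_lt_of_le hz.1 with h' | h'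
      · exfalso; rw [← h'] at hz0'; norm_num at hz0'
      · exact h'
    exact hmin z hzpos (lt_of_le_of_lt hz.2 hstm) (by linarith)
  -- main claim for t strictly below tmax
  have key : ∀ t : ℝ, 0 ≤ t → t < tmax → Φ t ≤ f t := by
    intro t ht0 httm
    refine le_of_forall_pos_le_add ?_
    intro θ hθ
    have ht1 : t ≤ 1 := le_trans httm.le htle
    obtain ⟨d, hd_def⟩ : ∃ d : ℝ, d = (1 - m * t) ^ 2 - Sig2 * c * t := ⟨_, rfl⟩
    have hd : 0 < d := hd_def ▸ hq0 t ht0 httm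
    have hmt1 : m * t ≤ 1 := by nlinarith [mul_nonneg hm0.le ht0]
    have hd1 : d ≤ 1 := by
      rw [hd_def]
      nlinarith [mul_nonneg (mul_nonneg hS.le hc) ht0, mul_nonneg hm0.le ht0,
        mul_le_mul_of_nonneg_right hmt1 (mul_nonneg hm0.le ht0)]
    obtain ⟨ρ, hρ, hρ2⟩ : ∃ ρ : ℝ, 0 < ρ ∧ ρ ^ 2 = d / 2 :=
      ⟨Real.sqrt (d / 2), Real.sqrt_pos.mpr (by linarith), Real.sq_sqrt (by linarith)⟩
    obtain ⟨ε, hε, hε1, hε2⟩ : ∃ ε : ℝ, 0 < ε ∧ Sig2 * ε ≤ d / 2 ∧ ε ≤ ρ * θ / 2 := by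
      refine ⟨min (d / (2 * Sig2)) (ρ * θ / 2),
        lt_min (by positivity) (by positivity), ?_, min_le_right _ _⟩
      have h' : min (d / (2 * Sig2)) (ρ * θ / 2) ≤ d / (2 * Sig2) := min_le_left _ _
      have h'' : Sig2 * (d / (2 * Sig2)) = d / 2 := by field_simp
      calc Sig2 * min (d / (2 * Sig2)) (ρ * θ / 2) ≤ Sig2 * (d / (2 * Sig2)) :=
            mul_le_mul_of_nonneg_left h' hS.le
        _ = d / 2 := h''
    obtain ⟨η, hη, hη1, hη2, hη3⟩ : ∃ η : ℝ, 0 < η ∧ Sig2 * η ≤ ρ / 2 ∧ η ≤ θ / 2 ∧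
        η * (2 * m + Sig2 * (c + ε) / 2 + 1) ≤ ε * ρ / 2 := by
      have hK : (0:ℝ) < 2 * m + Sig2 * (c + ε) / 2 + 1 := by positivity
      set K : ℝ := 2 * m + Sig2 * (c + ε) / 2 + 1 with hK_def
      refine ⟨min (min (ρ / (2 * Sig2)) (θ / 2)) (ε * ρ / (2 * K)),
        lt_min (lt_min (by positivity) (by linarith)) (by positivity), ?_, ?_, ?_⟩
      · have h' : min (min (ρ / (2 * Sig2)) (θ / 2)) (ε * ρ / (2 * K)) ≤ ρ / (2 * Sig2) :=
          le_trans (min_le_left _ _) (min_le_left _ _)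
        have h'' : Sig2 * (ρ / (2 * Sig2)) = ρ / 2 := by field_simp
        calc Sig2 * min (min (ρ / (2 * Sig2)) (θ / 2)) (ε * ρ / (2 * K))
            ≤ Sig2 * (ρ / (2 * Sig2)) := mul_le_mul_of_nonneg_left h' hS.le
          _ = ρ / 2 := h''
      · exact le_trans (min_le_left _ _) (min_le_right _ _)
      · have h' : min (min (ρ / (2 * Sig2)) (θ / 2)) (ε * ρ / (2 * K)) ≤ ε * ρ / (2 * K) :=
          min_le_right _ _
        have h'' : ε * ρ / (2 * K) * K = ε * ρ / 2 := by field_simp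
        calc min (min (ρ / (2 * Sig2)) (θ / 2)) (ε * ρ / (2 * K)) * K
            ≤ ε * ρ / (2 * K) * K := mul_le_mul_of_nonneg_right h' hK.le
          _ = ε * ρ / 2 := h''
    -- qe lower bound on [0,t]
    have hql : ∀ s, 0 ≤ s → s ≤ t → ρ ^ 2 ≤ (1 - m * s) ^ 2 - Sig2 * (c + ε) * s := by
      intro s hs0 hst
      have hs1 : s ≤ 1 := hst.trans ht1
      have hmono : d ≤ (1 - m * s) ^ 2 - Sig2 * c * s := by
        rw [hd_def]
        nlinarith [mul_nonneg (mul_nonneg hS.le hc) (sub_nonneg.mpr hst),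
          mul_nonneg hm0.le (sub_nonneg.mpr hst), mul_nonneg hm0.le hs0,
          mul_nonneg (mul_nonneg hm0.le hm0.le) (mul_nonneg hs0 (sub_nonneg.mpr hst))]
      have heps : Sig2 * ε * s ≤ d / 2 := by
        nlinarith [mul_nonneg (mul_nonneg hS.le hε.le) hs0,
          mul_le_mul_of_nonneg_left hs1 (mul_nonneg hS.le hε.le)]
      rw [hρ2]
      nlinarith
    have haux := stmt12_aux m c Sig2 t ρ ε η hm0 hm1 hc hS ht0 ht1 hε hρ hql hη hη1 hη3
      Φ hcont hnn h0 hsub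
    -- compare the perturbed barrier with f t
    have hd' : Real.sqrt d ^ 2 = d := Real.sq_sqrt hd.le
    obtain ⟨b, hb_def⟩ : ∃ b : ℝ, b = (1 - m * t) ^ 2 - Sig2 * (c + ε) * t := ⟨_, rfl⟩
    have hbρ : ρ ^ 2 ≤ b := hb_def ▸ hql t ht0 le_rfl
    have hb0 : 0 ≤ b := le_trans (by positivity) hbρ
    have hGb : ρ ≤ Real.sqrt b := (Real.le_sqrt hρ.le hb0).mpr hbρ
    have hGb2 : Real.sqrt b ^ 2 = b := Real.sq_sqrt hb0
    have hda : ρ ≤ Real.sqrt d := by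
      have h' : Real.sqrt (d / 2) ≤ Real.sqrt d := Real.sqrt_le_sqrt (by linarith)
      calc ρ = Real.sqrt (ρ ^ 2) := (Real.sqrt_sq hρ.le).symm
        _ = Real.sqrt (d / 2) := by rw [hρ2]
        _ ≤ Real.sqrt d := h'
    have hbd : d - b = Sig2 * ε * t := by rw [hd_def, hb_def]; ring
    have hdiff : Real.sqrt d - Real.sqrt b ≤ Sig2 * (θ / 2) := by
      have hid : (Real.sqrt d - Real.sqrt b) * (Real.sqrt d + Real.sqrt b) = Sig2 * ε * t := by
        have h' : (Real.sqrt d - Real.sqrt b) * (Real.sqrt d + Real.sqrt b)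
            = Real.sqrt d ^ 2 - Real.sqrt b ^ 2 := by ring
        rw [h', hd', hGb2, hbd]
      have hεt : Sig2 * ε * t ≤ Sig2 * (ρ * θ / 2) := by
        have h1 : ε * t ≤ ε := by nlinarith
        have h2 : ε * t ≤ ρ * θ / 2 := h1.trans hε2
        calc Sig2 * ε * t = Sig2 * (ε * t) := by ring
          _ ≤ Sig2 * (ρ * θ / 2) := mul_le_mul_of_nonneg_left h2 hS.le
      have hXnn : 0 ≤ Real.sqrt d - Real.sqrt b := by
        have hble : b ≤ d := by nlinarith [mul_nonneg (mul_nonneg hS.le hε.le) ht0]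
        have := Real.sqrt_le_sqrt hble
        linarith
      have h2ρ : 2 * ρ ≤ Real.sqrt d + Real.sqrt b := by linarith
      have hmul : (Real.sqrt d - Real.sqrt b) * (2 * ρ) ≤ Sig2 * (ρ * θ / 2) := by
        calc (Real.sqrt d - Real.sqrt b) * (2 * ρ)
            ≤ (Real.sqrt d - Real.sqrt b) * (Real.sqrt d + Real.sqrt b) :=
              mul_le_mul_of_nonneg_left h2ρ hXnn
          _ = Sig2 * ε * t := hid
          _ ≤ Sig2 * (ρ * θ / 2) := hεt
      nlinarith [hmul, hρ, mul_pos (mul_pos hS hρ) hθ]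
    have hBf : ((1 - m * t) - Real.sqrt b) / Sig2 ≤ f t + θ / 2 := by
      rw [hf t, ← hd_def]
      have h' : (Real.sqrt d - Real.sqrt b) / Sig2 ≤ θ / 2 := by
        rw [div_le_iff₀ hS]; nlinarith
      have hq : ((1 - m * t) - Real.sqrt b) / Sig2
          = ((1 - m * t) - Real.sqrt d) / Sig2 + (Real.sqrt d - Real.sqrt b) / Sig2 := by
        ring
      linarith
    rw [← hb_def] at haux
    linarith
  -- conclude, including the endpoint tmax by continuity
  rintro t ⟨ht0, httm⟩
  rcases eq_or_lt_of_le httm with heq | hlt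
  · -- t = tmax : use left limits
    subst heq
    have hfc : Continuous f := by
      have h' : f = fun u => ((1 - m * u) - Real.sqrt ((1 - m * u) ^ 2 - Sig2 * c * u)) / Sig2 :=
        funext hf
      rw [h']; fun_prop
    have hne : t ∈ closure (Ico (0:ℝ) t) := by
      rw [closure_Ico (ne_of_lt htpos)]
      exact ⟨ht0, le_refl t⟩
    haveI hNB : (nhdsWithin t (Ico (0:ℝ) t)).NeBot := mem_closure_iff_nhdsWithin_neBot.mp hne
    have htend : Tendsto (fun s => Φ s - f s) (nhdsWithin t (Ico (0:ℝ) t))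
        (nhds (Φ t - f t)) := by
      have hc1 : ContinuousWithinAt Φ (Ico (0:ℝ) t) t := by
        apply (hcont t ⟨ht0, htle⟩).mono
        exact fun x hx => ⟨hx.1, hx.2.le.trans htle⟩
      exact (hc1.sub hfc.continuousAt.continuousWithinAt).tendsto
    have hev : ∀ᶠ s in nhdsWithin t (Ico (0:ℝ) t), Φ s - f s ≤ 0 :=
      eventually_mem_nhdsWithin.mono fun s hs => by linarith [key s hs.1 hs.2]
    have := le_of_tendsto htend hev
    linarith
  · exact key t ht0 hlt
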